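/- For 0 < β < 1 and real numbers a < b, one has C_β ∫_{-∞}^{∞} |F1_{[a,b]}(ξ)|² |ξ|^{β-1} dξ = (4π / ((2-β)(1-β))) (b-a)^{2-β}, where F1_{[a,b]}(ξ) = ∫_a^b e^{-iξy} dy = (e^{-iξa} - e^{-iξb})/(iξ) is the Fourier transform of the indicator of [a,b]. -/

import Mathlib

open MeasureTheory Real

open Set Filter Topology

lemma int_exp {r : ℝ} (hr : 0 < r) : ∫ x in Ioi (0:ℝ), Real.exp (-(r*x)) = 1/r := by
  have := Real.integral_rpow_mul_exp_neg_mul_Ioi (a := 1) one_pos hr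
  simp only [sub_self, Real.rpow_zero, one_mul, Real.rpow_one, Real.Gamma_one, mul_one] at this
  exact this

lemma int_gauss {c s : ℝ} (hc : 0 < c) (hs : 0 < s) :
    ∫ x in Ioi (0:ℝ), x ^ (c-1) * Real.exp (-(s * x^2)) = (1/s) ^ (c/2) * Real.Gamma (c/2) / 2 := by
  have h := integral_comp_rpow_Ioi_of_pos (g := fun y => y ^ (c/2-1) * Real.exp (-(s * y)))
    (p := 2) two_pos
  have h2 : ∀ x ∈ Ioi (0:ℝ), ((2:ℝ) * x ^ ((2:ℝ) - 1)) • ((x ^ (2:ℝ)) ^ (c/2-1) * Real.exp (-(s * x ^ (2:ℝ))))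
      = 2 * (x ^ (c-1) * Real.exp (-(s * x^2))) := by
    intro x hx
    have hx0 : (0:ℝ) < x := hx
    have e1 : x ^ (2:ℝ) = x ^ 2 := Real.rpow_two x
    have e2 : (x ^ (2:ℝ)) ^ (c/2-1) = x ^ (c-2) := by
      rw [← Real.rpow_mul hx0.le]; congr 1; ring
    have e3 : x ^ ((2:ℝ)-1) = x := by norm_num
    have e4 : x * x ^ (c-2) = x ^ (c-1) := by
      have h5 := Real.rpow_add hx0 1 (c-2)
      rw [Real.rpow_one, show (1:ℝ)+(c-2) = c-1 by ring] at h5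
      exact h5.symm
    rw [e2, e3, e1, smul_eq_mul, ← e4]; ring
  rw [setIntegral_congr_fun measurableSet_Ioi h2, MeasureTheory.integral_const_mul,
    Real.integral_rpow_mul_exp_neg_mul_Ioi (by linarith : (0:ℝ) < c/2) hs] at h
  linarith [h]

section expcos
variable {t : ℝ} (ht : 0 < t)

private noncomputable def Gfun (t u : ℝ) : ℝ :=
  -(Real.exp (-(t*u)))/t - Real.exp (-(t*u)) * (Real.sin u - t * Real.cos u)/(1+t^2)

include ht in
private lemma Gderiv : ∀ u ∈ Ioi (0:ℝ), HasDerivAt (Gfun t)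
    ((1 - Real.cos u) * Real.exp (-(t*u))) u := by
  intro u _
  have hexp : HasDerivAt (fun u : ℝ => Real.exp (-(t*u))) (Real.exp (-(t*u)) * (-t)) u := by
    have h1 : HasDerivAt (fun u : ℝ => -(t*u)) (-t) u := by
      simpa [neg_mul] using (hasDerivAt_id u).const_mul (-t)
    exact (Real.hasDerivAt_exp _).comp u h1
  have h2 : HasDerivAt (fun u => Real.sin u - t * Real.cos u)
      (Real.cos u - t * (-Real.sin u)) u :=
    (Real.hasDerivAt_sin u).sub ((Real.hasDerivAt_cos u).const_mul t)
  have h3 := ((hexp.neg.div_const t).sub ((hexp.mul h2).div_const (1+t^2)))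
  refine HasDerivAt.congr_deriv (h3 : HasDerivAt (Gfun t) _ u) ?_
  have h4 : t ≠ 0 := ht.ne'
  have h5 : (1:ℝ)+t^2 ≠ 0 := by positivity
  field_simp
  ring

include ht in
private lemma Gtend : Tendsto (Gfun t) atTop (𝓝 0) := by
  have he : Tendsto (fun u : ℝ => Real.exp (-(t*u))) atTop (𝓝 0) := by
    apply Real.tendsto_exp_atBot.comp
    exact tendsto_neg_atBot_iff.mpr ((tendsto_const_mul_atTop_of_pos ht).mpr tendsto_id)
  have hb1 : Tendsto (fun u : ℝ => -(Real.exp (-(t*u)))/t) atTop (𝓝 0) := by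
    simpa using (he.neg.div_const t)
  have hb2 : Tendsto (fun u : ℝ => Real.exp (-(t*u)) * (Real.sin u - t * Real.cos u)/(1+t^2))
      atTop (𝓝 0) := by
    rw [show (0:ℝ) = 0/(1+t^2) by simp]
    apply Tendsto.div_const
    apply squeeze_zero_norm (a := fun u => (1+t) * Real.exp (-(t*u)))
    · intro u
      rw [norm_mul, Real.norm_eq_abs, Real.norm_eq_abs, Real.abs_exp, mul_comm]
      apply mul_le_mul_of_nonneg_right _ (Real.exp_pos _).le
      calc |Real.sin u - t * Real.cos u| ≤ |Real.sin u| + |t * Real.cos u| := abs_sub _ _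
        _ ≤ 1 + t := by
            refine add_le_add (Real.abs_sin_le_one u) ?_
            rw [abs_mul, abs_of_pos ht]
            nlinarith [Real.abs_cos_le_one u, ht]
    · simpa using he.const_mul (1+t)
  have := hb1.sub hb2
  rw [sub_zero] at this
  exact this

end expcos

section expcos2
variable {t : ℝ} (ht : 0 < t)

include ht in
lemma expcos_integrable :
    IntegrableOn (fun u => (1 - Real.cos u) * Real.exp (-(t*u))) (Ioi 0) := by
  apply integrableOn_Ioi_deriv_of_nonneg _ (Gderiv ht) _ (Gtend ht)
  · have : Continuous (Gfun t) := by unfold Gfun; fun_prop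
    exact this.continuousWithinAt
  · intro u _
    exact mul_nonneg (by linarith [Real.cos_le_one u]) (Real.exp_pos _).le

include ht in
lemma expcos_integral :
    ∫ u in Ioi (0:ℝ), (1 - Real.cos u) * Real.exp (-(t*u)) = 1/(t*(1+t^2)) := by
  rw [integral_Ioi_of_hasDerivAt_of_nonneg _ (Gderiv ht)
    (fun u _ => mul_nonneg (by linarith [Real.cos_le_one u]) (Real.exp_pos _).le) (Gtend ht)]
  · rw [Gfun]
    have h4 : t ≠ 0 := ht.ne'
    have h5 : (1:ℝ)+t^2 ≠ 0 := by positivity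
    simp only [mul_zero, neg_zero, Real.exp_zero, Real.sin_zero, Real.cos_zero, mul_one]
    field_simp
    ring
  · have : Continuous (Gfun t) := by unfold Gfun; fun_prop
    exact this.continuousWithinAt

end expcos2

lemma fubini_Ioi {F : ℝ → ℝ → ℝ} {g h : ℝ → ℝ}
    (hmeas : Measurable (Function.uncurry F))
    (hFnn : ∀ t ∈ Ioi (0:ℝ), ∀ s ∈ Ioi (0:ℝ), 0 ≤ F t s)
    (hgi : ∀ t ∈ Ioi (0:ℝ), IntegrableOn (F t) (Ioi 0))
    (hgv : ∀ t ∈ Ioi (0:ℝ), ∫ s in Ioi (0:ℝ), F t s = g t)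
    (hhi : ∀ s ∈ Ioi (0:ℝ), IntegrableOn (fun t => F t s) (Ioi 0))
    (hhv : ∀ s ∈ Ioi (0:ℝ), ∫ t in Ioi (0:ℝ), F t s = h s)
    (hgm : AEStronglyMeasurable g (volume.restrict (Ioi 0)))
    (hhnn : ∀ s ∈ Ioi (0:ℝ), 0 ≤ h s)
    (hhint : IntegrableOn h (Ioi 0)) :
    ∫ t in Ioi (0:ℝ), g t = ∫ s in Ioi (0:ℝ), h s := by
  have hgnn : ∀ t ∈ Ioi (0:ℝ), 0 ≤ g t := by
    intro t ht
    rw [← hgv t ht]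
    exact setIntegral_nonneg measurableSet_Ioi (fun s hs => hFnn t ht s hs)
  have hae : (0:ℝ → ℝ) ≤ᵐ[volume.restrict (Ioi 0)] g :=
    (ae_restrict_iff' measurableSet_Ioi).mpr (ae_of_all _ hgnn)
  rw [integral_eq_lintegral_of_nonneg_ae hae hgm]
  have step1 : ∫⁻ t in Ioi (0:ℝ), ENNReal.ofReal (g t)
      = ∫⁻ t in Ioi (0:ℝ), ∫⁻ s in Ioi (0:ℝ), ENNReal.ofReal (F t s) := by
    apply setLIntegral_congr_fun measurableSet_Ioi
    intro t ht
    dsimp only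
    rw [← hgv t ht, ofReal_integral_eq_lintegral_ofReal (hgi t ht)
      ((ae_restrict_iff' measurableSet_Ioi).mpr (ae_of_all _ (fun s hs => hFnn t ht s hs)))]
  have step2 : ∫⁻ t in Ioi (0:ℝ), ∫⁻ s in Ioi (0:ℝ), ENNReal.ofReal (F t s)
      = ∫⁻ s in Ioi (0:ℝ), ∫⁻ t in Ioi (0:ℝ), ENNReal.ofReal (F t s) := by
    apply lintegral_lintegral_swap
    exact (ENNReal.measurable_ofReal.comp hmeas).aemeasurable
  have step3 : ∫⁻ s in Ioi (0:ℝ), ∫⁻ t in Ioi (0:ℝ), ENNReal.ofReal (F t s)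
      = ∫⁻ s in Ioi (0:ℝ), ENNReal.ofReal (h s) := by
    apply setLIntegral_congr_fun measurableSet_Ioi
    intro s hs
    dsimp only
    rw [← hhv s hs, ofReal_integral_eq_lintegral_ofReal (hhi s hs)
      ((ae_restrict_iff' measurableSet_Ioi).mpr (ae_of_all _ (fun t ht => hFnn t ht s hs)))]
  rw [step1, step2, step3, ← ofReal_integral_eq_lintegral_ofReal hhint
    ((ae_restrict_iff' measurableSet_Ioi).mpr (ae_of_all _ hhnn))]
  rw [ENNReal.toReal_ofReal (setIntegral_nonneg measurableSet_Ioi hhnn)]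

variable {β : ℝ}

lemma K_contOn (hβ1 : β < 1) : ContinuousOn (fun t : ℝ => t ^ (1-β) / (1+t^2)) (Icc 0 1) := by
  apply ContinuousOn.div
  · exact continuousOn_id.rpow_const (fun x _ => Or.inr (by linarith))
  · fun_prop
  · intro x _; positivity

lemma K_integrable (hβ0 : 0 < β) (hβ1 : β < 1) :
    IntegrableOn (fun t : ℝ => t ^ (1-β) / (1+t^2)) (Ioi 0) := by
  rw [← Ioc_union_Ioi_eq_Ioi (le_of_lt one_pos), integrableOn_union]
  constructor
  · exact ((K_contOn hβ1).integrableOn_Icc).mono_set Ioc_subset_Icc_self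
  · apply Integrable.mono' (g := fun t : ℝ => t ^ (-1-β))
      ((integrableOn_Ioi_rpow_of_lt (by linarith) one_pos))
    · apply ContinuousOn.aestronglyMeasurable _ measurableSet_Ioi
      apply ContinuousOn.div
      · exact continuousOn_id.rpow_const (fun x _ => Or.inr (by linarith))
      · fun_prop
      · intro x _; positivity
    · filter_upwards [ae_restrict_mem measurableSet_Ioi] with t ht
      have ht1 : (1:ℝ) < t := ht
      have ht0 : (0:ℝ) < t := lt_trans one_pos ht1
      rw [Real.norm_eq_abs, abs_of_nonneg (by positivity)]
      have h1 : t ^ (1-β) / (1+t^2) ≤ t ^ (1-β) / t^2 := by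
        apply div_le_div_of_nonneg_left (by positivity) (by positivity) (by linarith)
      refine h1.trans (le_of_eq ?_)
      rw [← Real.rpow_two, ← Real.rpow_sub ht0]
      congr 1; ring


lemma K_val (hβ0 : 0 < β) (hβ1 : β < 1) :
    ∫ t in Ioi (0:ℝ), t ^ (1-β) / (1+t^2)
      = Real.Gamma ((2-β)/2) * Real.Gamma (β/2) / 2 := by
  have key : ∫ t in Ioi (0:ℝ), t ^ (1-β) / (1+t^2)
      = ∫ s in Ioi (0:ℝ), Real.exp (-s) * s ^ (β/2-1) * (Real.Gamma ((2-β)/2) / 2) := by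
    apply fubini_Ioi (F := fun t s => t ^ (1-β) * Real.exp (-((1+t^2)*s)))
    · show Measurable (fun p : ℝ × ℝ => p.1 ^ (1-β) * Real.exp (-((1+p.1^2)*p.2)))
      fun_prop
    · intro t ht s hs
      have ht' : (0:ℝ) < t := ht
      positivity
    · intro t ht
      have h0 : IntegrableOn (fun s => Real.exp (-(1+t^2)*s)) (Ioi 0) :=
        exp_neg_integrableOn_Ioi 0 (by nlinarith [sq_nonneg t])
      have h1 : IntegrableOn (fun s => t ^ (1-β) * Real.exp (-(1+t^2)*s)) (Ioi 0) :=
        h0.const_mul _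
      exact h1.congr_fun (fun s _ => by simp only [neg_mul]) measurableSet_Ioi
    · intro t ht
      rw [MeasureTheory.integral_const_mul, int_exp (by positivity), mul_one_div]
    · intro s hs
      have h1 : IntegrableOn (fun t : ℝ => t ^ (1-β) * Real.exp (-s * t ^ (2:ℝ))) (Ioi 0) :=
        integrableOn_rpow_mul_exp_neg_mul_rpow (by linarith) two_pos hs
      have h2 : IntegrableOn (fun t : ℝ => Real.exp (-s) * (t ^ (1-β) * Real.exp (-s * t ^ (2:ℝ))))
          (Ioi 0) := h1.const_mul _
      apply MeasureTheory.IntegrableOn.congr_fun h2 _ measurableSet_Ioi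
      intro t ht
      show Real.exp (-s) * (t ^ (1-β) * Real.exp (-s * t ^ (2:ℝ)))
          = t ^ (1-β) * Real.exp (-((1+t^2)*s))
      rw [Real.rpow_two, show -((1+t^2)*s) = -s + -s * t^2 by ring, Real.exp_add]
      ring
    · intro s hs
      have hs0 : (0:ℝ) < s := hs
      have e1 : ∀ t ∈ Ioi (0:ℝ), t ^ (1-β) * Real.exp (-((1+t^2)*s))
          = Real.exp (-s) * (t ^ ((2-β)-1) * Real.exp (-(s * t^2))) := by
        intro t ht
        rw [show -((1+t^2)*s) = -s + -(s*t^2) by ring, Real.exp_add,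
          show (1:ℝ)-β = (2-β)-1 by ring]
        ring
      rw [setIntegral_congr_fun measurableSet_Ioi e1, MeasureTheory.integral_const_mul,
        int_gauss (by linarith) hs0]
      have e2 : ((1:ℝ)/s) ^ ((2-β)/2) = s ^ (β/2-1) := by
        rw [one_div, ← Real.rpow_neg_one s, ← Real.rpow_mul hs0.le]
        congr 1; ring
      rw [e2]; ring
    · apply Measurable.aestronglyMeasurable
      show Measurable (fun t : ℝ => t ^ (1-β) / (1+t^2))
      fun_prop
    · intro s hs
      have hs' : (0:ℝ) < s := hs
      have : 0 < Real.Gamma ((2-β)/2) := Real.Gamma_pos_of_pos (by linarith)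
      positivity
    · have h3 : IntegrableOn (fun s : ℝ => Real.exp (-s) * s ^ (β/2 - 1)
          * (Real.Gamma ((2-β)/2) / 2)) (Ioi 0) :=
        (Real.GammaIntegral_convergent (by linarith : (0:ℝ) < β/2)).mul_const _
      exact MeasureTheory.IntegrableOn.congr_fun h3 (fun s _ => by norm_num) measurableSet_Ioi
  rw [key, MeasureTheory.integral_mul_const, ← Real.Gamma_eq_integral (by linarith : (0:ℝ) < β/2)]
  ring

lemma Jp_val (hβ0 : 0 < β) (hβ1 : β < 1) :
    ∫ u in Ioi (0:ℝ), (1 - Real.cos u) * u ^ (β-3)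
      = Real.Gamma ((2-β)/2) * Real.Gamma (β/2) / (2 * Real.Gamma (3-β)) := by
  have hΓ : 0 < Real.Gamma (3-β) := Real.Gamma_pos_of_pos (by linarith)
  have key : ∫ u in Ioi (0:ℝ), (1 - Real.cos u) * u ^ (β-3)
      = ∫ t in Ioi (0:ℝ), t ^ (1-β) / (1+t^2) / Real.Gamma (3-β) := by
    apply fubini_Ioi
      (F := fun u t => (1 - Real.cos u) * (t ^ (2-β) * Real.exp (-(u*t))) / Real.Gamma (3-β))
    · show Measurable (fun p : ℝ × ℝ =>
        (1 - Real.cos p.1) * (p.2 ^ (2-β) * Real.exp (-(p.1*p.2))) / Real.Gamma (3-β))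
      fun_prop
    · intro u hu t ht
      have ht' : (0:ℝ) < t := ht
      have hc := Real.cos_le_one u
      have h1 : (0:ℝ) ≤ 1 - Real.cos u := by linarith
      positivity
    · intro u hu
      have h1 : IntegrableOn (fun t : ℝ => t ^ (2-β) * Real.exp (-u * t ^ (1:ℝ))) (Ioi 0) :=
        integrableOn_rpow_mul_exp_neg_mul_rpow (by linarith) one_pos hu
      have h2 : IntegrableOn (fun t : ℝ =>
          (1 - Real.cos u) * (t ^ (2-β) * Real.exp (-u * t ^ (1:ℝ))) / Real.Gamma (3-β))
          (Ioi 0) := (h1.const_mul _).div_const _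
      apply MeasureTheory.IntegrableOn.congr_fun h2 _ measurableSet_Ioi
      intro t ht
      show (1 - Real.cos u) * (t ^ (2-β) * Real.exp (-u * t ^ (1:ℝ))) / Real.Gamma (3-β)
          = (1 - Real.cos u) * (t ^ (2-β) * Real.exp (-(u*t))) / Real.Gamma (3-β)
      rw [Real.rpow_one]
      ring_nf
    · intro u hu
      have hu' : (0:ℝ) < u := hu
      have e1 : ∀ t ∈ Ioi (0:ℝ),
          (1 - Real.cos u) * (t ^ (2-β) * Real.exp (-(u*t))) / Real.Gamma (3-β)
          = ((1 - Real.cos u) / Real.Gamma (3-β)) * (t ^ ((3-β)-1) * Real.exp (-(u*t))) := by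
        intro t ht
        rw [show (2:ℝ)-β = (3-β)-1 by ring]
        ring
      rw [setIntegral_congr_fun measurableSet_Ioi e1, MeasureTheory.integral_const_mul,
        Real.integral_rpow_mul_exp_neg_mul_Ioi (by linarith) hu']
      have e2 : ((1:ℝ)/u) ^ (3-β) = u ^ (β-3) := by
        rw [one_div, ← Real.rpow_neg_one u, ← Real.rpow_mul hu'.le]
        congr 1; ring
      rw [e2]
      field_simp
    · intro t ht
      have ht' : (0:ℝ) < t := ht
      have h1 : IntegrableOn (fun u : ℝ =>
          ((1 - Real.cos u) * Real.exp (-(t*u))) * (t ^ (2-β) / Real.Gamma (3-β)))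
          (Ioi 0) := (expcos_integrable ht').mul_const _
      apply MeasureTheory.IntegrableOn.congr_fun h1 _ measurableSet_Ioi
      intro u hu
      show ((1 - Real.cos u) * Real.exp (-(t*u))) * (t ^ (2-β) / Real.Gamma (3-β))
          = (1 - Real.cos u) * (t ^ (2-β) * Real.exp (-(u*t))) / Real.Gamma (3-β)
      rw [mul_comm t u]
      ring
    · intro t ht
      have ht' : (0:ℝ) < t := ht
      have e1 : ∀ u ∈ Ioi (0:ℝ),
          (1 - Real.cos u) * (t ^ (2-β) * Real.exp (-(u*t))) / Real.Gamma (3-β)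
          = (t ^ (2-β) / Real.Gamma (3-β)) * ((1 - Real.cos u) * Real.exp (-(t*u))) := by
        intro u hu
        rw [mul_comm u t]
        ring
      rw [setIntegral_congr_fun measurableSet_Ioi e1, MeasureTheory.integral_const_mul,
        expcos_integral ht']
      have e2 : t ^ (2-β) * (1/(t*(1+t^2))) = t ^ (1-β) / (1+t^2) := by
        rw [show (2:ℝ)-β = (1-β)+1 by ring, Real.rpow_add ht', Real.rpow_one]
        field_simp
      rw [div_mul_eq_mul_div, e2]
    · apply Measurable.aestronglyMeasurable
      show Measurable (fun u : ℝ => (1 - Real.cos u) * u ^ (β-3))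
      fun_prop
    · intro t ht
      have ht' : (0:ℝ) < t := ht
      positivity
    · exact (K_integrable hβ0 hβ1).div_const _
  rw [key, MeasureTheory.integral_div, K_val hβ0 hβ1]
  ring

lemma abs_fourierInd_sq (a b ξ : ℝ) (hξ : ξ ≠ 0) :
    ‖(Complex.exp (-Complex.I * ξ * a) - Complex.exp (-Complex.I * ξ * b)) /
      (Complex.I * ξ)‖ ^ 2 = (2 - 2 * Real.cos ((b-a)*ξ)) / ξ^2 := by
  rw [norm_div, div_pow, Complex.sq_norm, Complex.sq_norm]
  have hden : Complex.normSq (Complex.I * ξ) = ξ^2 := by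
    simp [Complex.normSq_mul, Complex.normSq_ofReal, sq]
  rw [hden]
  congr 1
  have ea : -Complex.I * (ξ:ℂ) * (a:ℂ) = ((-(ξ*a) : ℝ) : ℂ) * Complex.I := by push_cast; ring
  have eb : -Complex.I * (ξ:ℂ) * (b:ℂ) = ((-(ξ*b) : ℝ) : ℂ) * Complex.I := by push_cast; ring
  rw [ea, eb, Complex.normSq_sub]
  have h1 : ∀ r : ℝ, Complex.normSq (Complex.exp ((r:ℂ) * Complex.I)) = 1 := by
    intro r
    rw [← Complex.sq_norm, Complex.norm_exp_ofReal_mul_I, one_pow]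
  rw [h1, h1]
  have h2 : (Complex.exp ((-(ξ*a) : ℝ) * Complex.I) *
      (starRingEnd ℂ) (Complex.exp ((-(ξ*b) : ℝ) * Complex.I))).re = Real.cos ((b-a)*ξ) := by
    rw [← Complex.exp_conj, ← Complex.exp_add]
    have : (starRingEnd ℂ) (((-(ξ*b) : ℝ) : ℂ) * Complex.I) = ((ξ*b : ℝ) : ℂ) * Complex.I := by
      rw [map_mul, Complex.conj_I, Complex.conj_ofReal]
      push_cast
      ring
    rw [this, show ((-(ξ*a) : ℝ) : ℂ) * Complex.I + ((ξ*b : ℝ) : ℂ) * Complex.I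
        = (((b-a)*ξ : ℝ) : ℂ) * Complex.I by push_cast; ring]
    exact Complex.exp_ofReal_mul_I_re _
  rw [h2]
  ring

/-- The Fourier transform of the indicator of `[a, b]`. -/
noncomputable def fourierInd (a b ξ : ℝ) : ℂ :=
  (Complex.exp (-Complex.I * ξ * a) - Complex.exp (-Complex.I * ξ * b)) / (Complex.I * ξ)

theorem stmt1 (β a b : ℝ) (hβ0 : 0 < β) (hβ1 : β < 1) (hab : a < b) :
    (Real.sqrt Real.pi * 2 ^ ((1:ℝ) - β) * Real.Gamma ((1 - β) / 2) / Real.Gamma (β / 2)) *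
      (∫ ξ : ℝ, ‖fourierInd a b ξ‖ ^ 2 * |ξ| ^ (β - 1))
      = (4 * Real.pi / ((2 - β) * (1 - β))) * (b - a) ^ ((2:ℝ) - β) := by
  set L : ℝ := b - a with hLdef
  have hL : 0 < L := by simp [hLdef]; linarith
  set g : ℝ → ℝ := fun x => (2 - 2 * Real.cos (L*x)) * x ^ (β-3) with hg
  -- step 1 : pointwise identity a.e.
  have h0 : ∀ᵐ ξ : ℝ, ξ ≠ 0 := by
    rw [ae_iff]
    simp only [not_not]
    have : {ξ : ℝ | ξ = 0} = {(0:ℝ)} := by ext x; simp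
    rw [this]
    exact measure_singleton 0
  have step1 : ∫ ξ : ℝ, ‖fourierInd a b ξ‖ ^ 2 * |ξ| ^ (β - 1)
      = ∫ ξ : ℝ, g |ξ| := by
    apply integral_congr_ae
    filter_upwards [h0] with ξ hξ
    have habs : (0:ℝ) < |ξ| := abs_pos.mpr hξ
    rw [fourierInd, abs_fourierInd_sq a b ξ hξ]
    have hcos : Real.cos ((b-a)*ξ) = Real.cos (L*|ξ|) := by
      rcases abs_cases ξ with ⟨h, _⟩ | ⟨h, _⟩
      · rw [h]
      · rw [h, show L * -ξ = -(L*ξ) by ring, Real.cos_neg]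
    rw [hcos, hg]
    simp only
    rw [div_mul_eq_mul_div, ← sq_abs ξ, mul_div_assoc]
    congr 1
    rw [← Real.rpow_natCast |ξ| 2, ← Real.rpow_sub habs]
    congr 1
    ring
  -- step 2 : evenness
  have step2 : ∫ ξ : ℝ, g |ξ| = 2 * ∫ x in Ioi (0:ℝ), g x := integral_comp_abs
  -- step 3 : scaling
  set G : ℝ → ℝ := fun y => (2 - 2 * Real.cos y) * y ^ (β-3) with hG
  have step3 : ∫ x in Ioi (0:ℝ), g x = L ^ ((2:ℝ)-β) * ∫ y in Ioi (0:ℝ), G y := by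
    have e3 : ∀ x ∈ Ioi (0:ℝ), g x = L ^ ((3:ℝ)-β) * G (L*x) := by
      intro x hx
      have hx' : (0:ℝ) < x := hx
      rw [hg, hG]
      simp only
      rw [Real.mul_rpow hL.le hx'.le, show L ^ ((3:ℝ)-β) = L ^ (3-β) from rfl]
      rw [show L ^ (3-β) * ((2 - 2 * Real.cos (L*x)) * (L ^ (β-3) * x ^ (β-3)))
        = (L ^ (3-β) * L ^ (β-3)) * ((2 - 2 * Real.cos (L*x)) * x ^ (β-3)) by ring,
        ← Real.rpow_add hL]
      norm_num
    rw [setIntegral_congr_fun measurableSet_Ioi e3, MeasureTheory.integral_const_mul]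
    rw [integral_comp_mul_left_Ioi G 0 hL, mul_zero, smul_eq_mul, ← mul_assoc]
    congr 1
    rw [← Real.rpow_neg_one L, ← Real.rpow_add hL]
    congr 1; ring
  -- step 4 : pull out factor 2
  have step4 : ∫ y in Ioi (0:ℝ), G y = 2 * ∫ y in Ioi (0:ℝ), (1 - Real.cos y) * y ^ (β-3) := by
    rw [← MeasureTheory.integral_const_mul]
    apply setIntegral_congr_fun measurableSet_Ioi
    intro y hy
    rw [hG]; ring
  rw [step1, step2, step3, step4, Jp_val hβ0 hβ1]
  -- final Gamma algebra
  have hΓβ2 : 0 < Real.Gamma (β/2) := Real.Gamma_pos_of_pos (by linarith)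
  have hΓ3 : 0 < Real.Gamma (3-β) := Real.Gamma_pos_of_pos (by linarith)
  have hΓ1β : 0 < Real.Gamma (1-β) := Real.Gamma_pos_of_pos (by linarith)
  have h2β : (2:ℝ) - β ≠ 0 := by linarith
  have h1β : (1:ℝ) - β ≠ 0 := by linarith
  have e5 : Real.Gamma ((1-β)/2) * Real.Gamma ((2-β)/2)
      = Real.Gamma (1-β) * 2 ^ β * Real.sqrt π := by
    have h := Real.Gamma_mul_Gamma_add_half ((1-β)/2)
    rw [show (1-β)/2 + 1/2 = (2-β)/2 by ring, show 2*((1-β)/2) = 1-β by ring] at h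
    rw [show (1:ℝ)-(1-β) = β by ring] at h
    exact h
  have e6 : Real.Gamma (3-β) = (2-β)*((1-β)*Real.Gamma (1-β)) := by
    rw [show (3:ℝ)-β = (2-β)+1 by ring, Real.Gamma_add_one h2β,
      show (2:ℝ)-β = (1-β)+1 by ring, Real.Gamma_add_one h1β]
  have e7 : (2:ℝ)^((1:ℝ)-β) * 2^β = 2 := by
    rw [← Real.rpow_add two_pos]; norm_num
  have e8 : Real.sqrt π * Real.sqrt π = π := Real.mul_self_sqrt Real.pi_nonneg
  rw [e6]
  field_simp
  linear_combination (Real.sqrt π*2^((1:ℝ)-β)*2) * e5 + (2*Real.Gamma (1-β)*(Real.sqrt π*Real.sqrt π)) * e7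
    + (4*Real.Gamma (1-β)) * e8
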